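/- Let k₀, p ∈ ℕ and let ψ(x,y) be a first-order formula with two free variables in the language of graphs (one binary edge relation symbol, no labels). Then there exist ℓ, q ∈ ℕ, depending only on k₀, p and ψ, such that for every finite simple graph G that is (k₀,p)-near-uniform, the interpreted graph I_ψ(G) — the simple graph on V(G) with edges {u,v} for distinct u, v such that G ⊨ ψ(u,v) ∨ ψ(v,u) — is (ℓ,q)-near-covered. -/

import Mathlib

/-- Two vertices `u`, `v` of a simple graph `G` are *near-`k`-twins* if the symmetric
difference of their open neighbourhoods has at most `k` elements. -/
def nearTwin {V : Type*} (G : SimpleGraph V) (k : ℕ) (u v : V) : Prop :=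
  (symmDiff (G.neighborSet u) (G.neighborSet v)).ncard ≤ k

/-- A graph is `(k₀, p)`-near-uniform if for some `k ≤ k₀` the near-`k`-twin relation is
an equivalence relation with at most `p` equivalence classes. -/
def NearUniform {V : Type*} (G : SimpleGraph V) (k₀ p : ℕ) : Prop :=
  ∃ k ≤ k₀, Equivalence (nearTwin G k) ∧
    {C : Set V | ∃ u, C = {v | nearTwin G k u v}}.ncard ≤ p

/-- A graph is `(ℓ, q)`-near-covered if there is a set `S` of at most `q` vertices such that
every vertex is a near-`ℓ`-twin of some element of `S`. -/
def NearCovered {V : Type*} (G : SimpleGraph V) (ℓ q : ℕ) : Prop :=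
  ∃ S : Set V, S.ncard ≤ q ∧ ∀ v, ∃ s ∈ S, nearTwin G ℓ s v

open FirstOrder

/-- The graph interpreted by the formula `ψ(x,y)` (in the language of graphs) in `G`:
distinct vertices `u`, `v` are adjacent iff `ψ(u,v) ∨ ψ(v,u)` holds in `G` viewed as a
first-order structure. -/
def interpGraphPlain {V : Type} (G : SimpleGraph V)
    (ψ : Language.graph.Formula (Fin 2)) : SimpleGraph V where
  Adj u v := u ≠ v ∧
    (letI := G.structure
     ψ.Realize ![u, v] ∨ ψ.Realize ![v, u])
  symm := by
    constructor
    intro u v h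
    exact ⟨Ne.symm h.1, h.2.elim Or.inr Or.inl⟩
  loopless := by
    constructor
    intro u h
    exact h.1 rfl

set_option linter.unusedSectionVars false

open FirstOrder Language Finset
open scoped Classical


namespace Stmt16

variable {α : Type*}

/-- Core counting lemma: a 0/1 matrix whose rows are pairwise `κ`-close and whose
columns are pairwise `κ`-close, with at most half ones, and at least `6κ+2` rows,
has all rows of weight `≤ 3κ`. -/
lemma matrixLemma (I J : Finset α) (e : α → α → Prop) (κ : ℕ)
    (hrow : ∀ i ∈ I, ∀ i' ∈ I, (J.filter (fun j => ¬(e i j ↔ e i' j))).card ≤ κ)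
    (hcol : ∀ j ∈ J, ∀ j' ∈ J, (I.filter (fun i => ¬(e i j ↔ e i j'))).card ≤ κ)
    (hmaj : 2 * ((I ×ˢ J).filter (fun q => e q.1 q.2)).card ≤ I.card * J.card)
    (hI : 6 * κ + 2 ≤ I.card) :
    ∀ i ∈ I, (J.filter (fun j => e i j)).card ≤ 3 * κ := by
  by_contra hcon
  push_neg at hcon
  obtain ⟨i₀, hi₀, hR⟩ := hcon
  set R : Finset α := J.filter (fun j => e i₀ j) with hRdef
  have hRJ : R ⊆ J := filter_subset _ _
  have hRcard : 3 * κ + 1 ≤ R.card := hR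
  -- Step 1: each row differs from row i₀ on R in at most κ entries
  have hterm : ∀ i ∈ I, (R.filter (fun j => ¬ e i j)).card ≤ κ := by
    intro i hi
    refine le_trans (card_le_card ?_) (hrow i₀ hi₀ i hi)
    intro j hj
    simp only [mem_filter, hRdef] at hj ⊢
    exact ⟨hj.1.1, fun h => hj.2 (h.mp hj.1.2)⟩
  -- Step 2: double counting
  have hswap : ∑ j ∈ R, (I.filter (fun i => ¬ e i j)).card
      = ∑ i ∈ I, (R.filter (fun j => ¬ e i j)).card := by
    simp only [card_filter]
    rw [Finset.sum_comm]
  have hsum : ∑ j ∈ R, (I.filter (fun i => ¬ e i j)).card ≤ κ * I.card := by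
    rw [hswap]
    calc ∑ i ∈ I, (R.filter (fun j => ¬ e i j)).card ≤ ∑ _i ∈ I, κ :=
          Finset.sum_le_sum hterm
      _ = κ * I.card := by rw [Finset.sum_const, smul_eq_mul, mul_comm]
  -- Step 3: a column of R with few zeros
  have hRne : R.Nonempty := by
    rw [← Finset.card_pos]; omega
  obtain ⟨j₀, hj₀R, hj₀min⟩ := Finset.exists_min_image R (fun j => (I.filter (fun i => ¬ e i j)).card) hRne
  set z := (I.filter (fun i => ¬ e i₀ j₀)).card with hzdef0
  set zc := fun j => (I.filter (fun i => ¬ e i j)).card with hzcdef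
  have hzmin : R.card * zc j₀ ≤ κ * I.card := by
    calc R.card * zc j₀ = ∑ _j ∈ R, zc j₀ := by rw [Finset.sum_const, smul_eq_mul]
      _ ≤ ∑ j ∈ R, zc j := Finset.sum_le_sum (fun j hj => hj₀min j hj)
      _ ≤ κ * I.card := hsum
  have hz1 : (3 * κ + 1) * zc j₀ ≤ κ * I.card :=
    le_trans (Nat.mul_le_mul_right _ hRcard) hzmin
  -- Step 4: all columns have many ones
  have hcompl : (I.filter (fun i => e i j₀)).card + zc j₀ = I.card := by
    simpa using Finset.card_filter_add_card_filter_not (s := I) (p := fun i => e i j₀)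
  have hcolbd : ∀ j ∈ J, I.card ≤ (I.filter (fun i => e i j)).card + κ + zc j₀ := by
    intro j hj
    have hsub : I.filter (fun i => e i j₀) ⊆
        I.filter (fun i => e i j) ∪ I.filter (fun i => ¬(e i j ↔ e i j₀)) := by
      intro i hi
      simp only [mem_filter, mem_union] at hi ⊢
      by_cases h : e i j
      · exact Or.inl ⟨hi.1, h⟩
      · exact Or.inr ⟨hi.1, fun hiff => h (hiff.mpr hi.2)⟩
    have := card_le_card hsub
    have hu := Finset.card_union_le (I.filter (fun i => e i j)) (I.filter (fun i => ¬(e i j ↔ e i j₀)))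
    have := hcol j hj j₀ (hRJ hj₀R)
    omega
  -- Step 5: total count
  have htot : ∑ j ∈ J, (I.filter (fun i => e i j)).card
      = ((I ×ˢ J).filter (fun q => e q.1 q.2)).card := by
    simp only [card_filter]
    rw [Finset.sum_comm]
    rw [Finset.sum_product]
  have hJtot : I.card * J.card ≤ ∑ j ∈ J, ((I.filter (fun i => e i j)).card + κ + zc j₀) := by
    calc I.card * J.card = ∑ _j ∈ J, I.card := by rw [Finset.sum_const, smul_eq_mul, mul_comm]
      _ ≤ _ := Finset.sum_le_sum hcolbd
  have hJsplit : ∑ j ∈ J, ((I.filter (fun i => e i j)).card + κ + zc j₀)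
      = (∑ j ∈ J, (I.filter (fun i => e i j)).card) + J.card * (κ + zc j₀) := by
    rw [Finset.sum_add_distrib, Finset.sum_add_distrib, Finset.sum_const, Finset.sum_const,
      smul_eq_mul, smul_eq_mul]
    ring
  have hJ1 : 1 ≤ J.card := by
    have := Finset.card_le_card hRJ
    omega
  -- combine: n|J| ≤ T + |J|(κ+z), 2T ≤ n|J|  ⇒  n ≤ 2(κ+z)
  have hfin : I.card ≤ 2 * (κ + zc j₀) := by
    have h1 : I.card * J.card ≤ ((I ×ˢ J).filter (fun q => e q.1 q.2)).card + J.card * (κ + zc j₀) := by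
      rw [← htot]; omega
    by_contra hc
    push_neg at hc
    have : J.card * (2 * (κ + zc j₀) + 1) ≤ J.card * I.card := Nat.mul_le_mul_left _ hc
    nlinarith [hmaj, h1]
  -- final contradiction
  nlinarith [hz1, hI, hfin]


variable {V : Type} [Fintype V]

/-- The set of vertices where the neighbourhoods of `u` and `v` differ. -/
noncomputable def diffSet (G : SimpleGraph V) (u v : V) : Finset V :=
  univ.filter (fun w => ¬(G.Adj u w ↔ G.Adj v w))

lemma symmDiff_neighborSet_eq (G : SimpleGraph V) (u v : V) :
    symmDiff (G.neighborSet u) (G.neighborSet v) = ↑(diffSet G u v) := by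
  ext w
  simp only [Set.mem_symmDiff, SimpleGraph.mem_neighborSet, diffSet, coe_filter, mem_univ,
    Set.mem_setOf_eq, true_and]
  tauto

lemma nearTwin_iff_card (G : SimpleGraph V) (k : ℕ) (u v : V) :
    nearTwin G k u v ↔ (diffSet G u v).card ≤ k := by
  rw [nearTwin, symmDiff_neighborSet_eq, Set.ncard_coe_finset]

section Ctx

variable (G : SimpleGraph V) (k : ℕ)

/-- The near-twin class of `u`, as a finset. -/
noncomputable def clsF (u : V) : Finset V := univ.filter (fun v => nearTwin G k u v)

/-- Majority adjacency between the classes of `u` and `v`. -/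
def AP (u v : V) : Prop :=
  (clsF G k u).card * (clsF G k v).card <
    2 * (((clsF G k u) ×ˢ (clsF G k v)).filter (fun q => G.Adj q.1 q.2)).card

/-- Union of the small classes. -/
noncomputable def XS : Finset V := univ.filter (fun v => (clsF G k v).card ≤ 6 * k + 1)

/-- The deviation graph relation. -/
def DD (u v : V) : Prop :=
  u ≠ v ∧ u ∉ XS G k ∧ v ∉ XS G k ∧ ¬(G.Adj u v ↔ AP G k u v)

variable {G k}

lemma mem_clsF {u v : V} : v ∈ clsF G k u ↔ nearTwin G k u v := by
  simp [clsF]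

variable (hE : Equivalence (nearTwin G k))
include hE

lemma mem_clsF_self (u : V) : u ∈ clsF G k u := mem_clsF.mpr (hE.refl u)

lemma clsF_eq_of {u v : V} (h : nearTwin G k u v) : clsF G k u = clsF G k v := by
  ext w
  simp only [mem_clsF]
  exact ⟨fun h' => hE.trans (hE.symm h) h', fun h' => hE.trans h h'⟩

lemma pair_nearTwin {u a b : V} (ha : a ∈ clsF G k u) (hb : b ∈ clsF G k u) :
    nearTwin G k a b :=
  hE.trans (hE.symm (mem_clsF.mp ha)) (mem_clsF.mp hb)

omit hE

lemma AP_congr {u v u' v' : V} (hu : clsF G k u = clsF G k u') (hv : clsF G k v = clsF G k v') :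
    AP G k u v ↔ AP G k u' v' := by
  unfold AP
  rw [hu, hv]

lemma AP_symm (u v : V) : AP G k u v ↔ AP G k v u := by
  unfold AP
  have hcard : (((clsF G k u) ×ˢ (clsF G k v)).filter (fun q => G.Adj q.1 q.2)).card
      = (((clsF G k v) ×ˢ (clsF G k u)).filter (fun q => G.Adj q.1 q.2)).card := by
    apply Finset.card_bij (fun q _ => Prod.swap q)
    · rintro ⟨a, b⟩ hab
      simp only [mem_filter, mem_product] at hab ⊢
      exact ⟨⟨hab.1.2, hab.1.1⟩, hab.2.symm⟩
    · rintro ⟨a, b⟩ _ ⟨c, d⟩ _ h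
      have := congrArg Prod.swap h
      simpa using this
    · rintro ⟨a, b⟩ hab
      refine ⟨⟨b, a⟩, ?_, rfl⟩
      simp only [mem_filter, mem_product] at hab ⊢
      exact ⟨⟨hab.1.2, hab.1.1⟩, hab.2.symm⟩
  rw [hcard, mul_comm]

lemma DD_symm {u v : V} : DD G k u v ↔ DD G k v u := by
  unfold DD
  rw [AP_symm]
  constructor <;> rintro ⟨h1, h2, h3, h4⟩
  · exact ⟨h1.symm, h3, h2, fun hh => h4 ⟨fun ha => hh.mp (G.adj_symm ha), fun ha => G.adj_symm (hh.mpr ha)⟩⟩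
  · exact ⟨h1.symm, h3, h2, fun hh => h4 ⟨fun ha => hh.mp (G.adj_symm ha), fun ha => G.adj_symm (hh.mpr ha)⟩⟩

include hE

/-- Key structural bound: a vertex in a big class deviates from the majority pattern
towards any fixed class in at most `3k` vertices. -/
lemma devBound {u : V} (hu : u ∉ XS G k) (w₀ : V) :
    ((clsF G k w₀).filter (fun w => ¬(G.Adj u w ↔ AP G k u w₀))).card ≤ 3 * k := by
  set I := clsF G k u with hI
  set J := clsF G k w₀ with hJ
  have hIcard : 6 * k + 2 ≤ I.card := by
    simp only [XS, mem_filter, mem_univ, true_and, not_le] at hu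
    rw [hI]
    omega
  have hrow : ∀ i ∈ I, ∀ i' ∈ I, (J.filter (fun j => ¬(G.Adj i j ↔ G.Adj i' j))).card ≤ k := by
    intro i hi i' hi'
    have := (nearTwin_iff_card G k i i').mp (pair_nearTwin hE hi hi')
    refine le_trans (card_le_card ?_) this
    intro w hw
    simp only [mem_filter, diffSet, mem_univ, true_and] at hw ⊢
    exact hw.2
  have hcol : ∀ j ∈ J, ∀ j' ∈ J, (I.filter (fun i => ¬(G.Adj i j ↔ G.Adj i j'))).card ≤ k := by
    intro j hj j' hj'
    have := (nearTwin_iff_card G k j j').mp (pair_nearTwin hE hj hj')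
    refine le_trans (card_le_card ?_) this
    intro w hw
    simp only [mem_filter, diffSet, mem_univ, true_and] at hw ⊢
    intro hiff
    exact hw.2 ⟨fun h => (G.adj_comm _ _).mp (hiff.mp ((G.adj_comm _ _).mp h)),
      fun h => (G.adj_comm _ _).mp (hiff.mpr ((G.adj_comm _ _).mp h))⟩
  by_cases hA : AP G k u w₀
  · -- majority is adjacency; deviations are non-adjacencies
    have hmaj : 2 * ((I ×ˢ J).filter (fun q => ¬ G.Adj q.1 q.2)).card ≤ I.card * J.card := by
      have hsplit := Finset.card_filter_add_card_filter_not
        (s := I ×ˢ J) (p := fun q => G.Adj q.1 q.2)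
      have hprod : (I ×ˢ J).card = I.card * J.card := Finset.card_product I J
      unfold AP at hA
      rw [← hI, ← hJ] at hA
      omega
    have hml := matrixLemma I J (fun a b => ¬ G.Adj a b) k
      (by intro i hi i' hi'
          refine le_trans (card_le_card ?_) (hrow i hi i' hi')
          intro w hw; simp only [mem_filter] at hw ⊢
          exact ⟨hw.1, fun h => hw.2 (not_iff_not.mpr h)⟩)
      (by intro j hj j' hj'
          refine le_trans (card_le_card ?_) (hcol j hj j' hj')
          intro w hw; simp only [mem_filter] at hw ⊢
          exact ⟨hw.1, fun h => hw.2 (not_iff_not.mpr h)⟩)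
      (by rw [Finset.filter_congr_decidable]; exact hmaj) hIcard u (mem_clsF_self hE u)
    refine le_trans (card_le_card ?_) hml
    intro w hw
    simp only [mem_filter] at hw ⊢
    refine ⟨hw.1, fun hadj => hw.2 ⟨fun _ => hA, fun _ => hadj⟩⟩
  · -- majority is non-adjacency; deviations are adjacencies
    have hmaj : 2 * ((I ×ˢ J).filter (fun q => G.Adj q.1 q.2)).card ≤ I.card * J.card := by
      unfold AP at hA
      rw [← hI, ← hJ] at hA
      omega
    have hml := matrixLemma I J (fun a b => G.Adj a b) k hrow hcol hmaj hIcard u (mem_clsF_self hE u)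
    refine le_trans (card_le_card ?_) hml
    intro w hw
    simp only [mem_filter] at hw ⊢
    refine ⟨hw.1, ?_⟩
    by_contra hadj
    exact hw.2 ⟨fun h => absurd h hadj, fun h => absurd h hA⟩

/-- Degree bound for the deviation graph. -/
lemma degBound {p : ℕ} (hp : (univ.image (clsF G k)).card ≤ p) (u : V) :
    (univ.filter (fun v => DD G k u v)).card ≤ p * (3 * k) := by
  by_cases hu : u ∈ XS G k
  · have : univ.filter (fun v => DD G k u v) = ∅ := by
      apply Finset.filter_false_of_mem
      intro v _ hDD
      exact hDD.2.1 hu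
    simp [this]
  · have hsub : univ.filter (fun v => DD G k u v) ⊆
        (univ.image (clsF G k)).biUnion (fun C => C.filter (fun w => DD G k u w)) := by
      intro w hw
      simp only [mem_filter, mem_univ, true_and] at hw
      simp only [mem_biUnion, mem_image]
      exact ⟨clsF G k w, ⟨w, mem_univ w, rfl⟩, mem_filter.mpr ⟨mem_clsF_self hE w, hw⟩⟩
    refine le_trans (card_le_card hsub) (le_trans (Finset.card_biUnion_le) ?_)
    have hbd : ∀ C ∈ univ.image (clsF G k), (C.filter (fun w => DD G k u w)).card ≤ 3 * k := by
      intro C hC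
      obtain ⟨w₀, _, rfl⟩ := mem_image.mp hC
      refine le_trans (card_le_card ?_) (devBound hE hu w₀)
      intro w hw
      simp only [mem_filter] at hw ⊢
      refine ⟨hw.1, ?_⟩
      have hcls : clsF G k w = clsF G k w₀ := (clsF_eq_of hE (mem_clsF.mp hw.1)).symm
      have : AP G k u w = AP G k u w₀ := by
        rw [AP_congr (rfl) hcls]
      rw [← this]
      exact hw.2.2.2.2
    calc ∑ C ∈ univ.image (clsF G k), (C.filter (fun w => DD G k u w)).card
        ≤ ∑ _C ∈ univ.image (clsF G k), (3 * k) := Finset.sum_le_sum hbd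
      _ = (univ.image (clsF G k)).card * (3 * k) := by rw [Finset.sum_const, smul_eq_mul]
      _ ≤ p * (3 * k) := Nat.mul_le_mul_right _ hp

/-- Size of the union of small classes. -/
lemma XS_card {p : ℕ} (hp : (univ.image (clsF G k)).card ≤ p) :
    (XS G k).card ≤ p * (6 * k + 1) := by
  have hsub : XS G k ⊆
      (univ.image (clsF G k)).biUnion (fun C => C.filter (fun w => w ∈ XS G k)) := by
    intro w hw
    simp only [mem_biUnion, mem_image]
    exact ⟨clsF G k w, ⟨w, mem_univ w, rfl⟩, mem_filter.mpr ⟨mem_clsF_self hE w, hw⟩⟩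
  refine le_trans (card_le_card hsub) (le_trans (Finset.card_biUnion_le) ?_)
  have hbd : ∀ C ∈ univ.image (clsF G k), (C.filter (fun w => w ∈ XS G k)).card ≤ 6 * k + 1 := by
    intro C hC
    obtain ⟨w₀, _, rfl⟩ := mem_image.mp hC
    by_cases hw₀ : w₀ ∈ XS G k
    · refine le_trans (card_le_card (filter_subset _ _)) ?_
      simpa [XS] using (mem_filter.mp hw₀).2
    · have : (clsF G k w₀).filter (fun w => w ∈ XS G k) = ∅ := by
        apply Finset.filter_false_of_mem
        intro w hwmem hwX
        apply hw₀
        have : clsF G k w = clsF G k w₀ := (clsF_eq_of hE (mem_clsF.mp hwmem)).symm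
        simp only [XS, mem_filter, mem_univ, true_and] at hwX ⊢
        rwa [← this]
      simp [this]
  calc ∑ C ∈ univ.image (clsF G k), (C.filter (fun w => w ∈ XS G k)).card
      ≤ ∑ _C ∈ univ.image (clsF G k), (6 * k + 1) := Finset.sum_le_sum hbd
    _ = (univ.image (clsF G k)).card * (6 * k + 1) := by rw [Finset.sum_const, smul_eq_mul]
    _ ≤ p * (6 * k + 1) := Nat.mul_le_mul_right _ hp

omit hE

/-- Reconstruction of adjacency from pattern and deviation. -/
lemma adj_reconstruct {u v : V} (hne : u ≠ v) (hu : u ∉ XS G k) (hv : v ∉ XS G k) :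
    G.Adj u v ↔ (AP G k u v ↔ ¬ DD G k u v) := by
  unfold DD
  constructor
  · intro hadj
    constructor
    · intro hA h
      exact h.2.2.2 ⟨fun _ => hA, fun _ => hadj⟩
    · intro h
      by_contra hA
      exact h ⟨hne, hu, hv, fun hh => hA (hh.mp hadj)⟩
  · intro h
    by_cases hA : AP G k u v
    · have := h.mp hA
      by_contra hadj
      exact this ⟨hne, hu, hv, fun hh => hadj (hh.mpr hA)⟩
    · by_contra hadj
      exact (h.mpr (fun hd => hd.2.2.2 ⟨fun ha => absurd ha hadj, fun ha => absurd ha hA⟩) : AP G k u v) |> hA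
  
/-- Number of classes as finset vs the set in the hypothesis. -/
lemma classes_card_eq :
    (univ.image (clsF G k)).card = {C : Set V | ∃ u, C = {v | nearTwin G k u v}}.ncard := by
  have hset : {C : Set V | ∃ u, C = {v | nearTwin G k u v}}
      = (fun s : Finset V => (↑s : Set V)) '' ↑(univ.image (clsF G k)) := by
    ext C
    simp only [Set.mem_setOf_eq, Set.mem_image, coe_image, coe_univ, Set.image_univ,
      Set.mem_range]
    constructor
    · rintro ⟨u, rfl⟩
      refine ⟨clsF G k u, ⟨u, rfl⟩, ?_⟩
      ext w
      simp [clsF]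
    · rintro ⟨s, ⟨u, rfl⟩, rfl⟩
      refine ⟨u, ?_⟩
      ext w
      simp [clsF]
  rw [hset, Set.ncard_image_of_injective _ Finset.coe_injective, Set.ncard_coe_finset]


/-! ### Balls in the deviation graph -/

variable (G k)

noncomputable def ball : ℕ → V → Finset V
  | 0, u => {u}
  | (r+1), u => ball r u ∪ univ.filter (fun v => ∃ z ∈ ball r u, DD G k z v)

variable {G k}

lemma mem_ball_self (r : ℕ) (u : V) : u ∈ ball G k r u := by
  induction r with
  | zero => simp [ball]
  | succ r ih => simp only [ball, mem_union]; exact Or.inl ih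

lemma ball_subset_succ (r : ℕ) (u : V) : ball G k r u ⊆ ball G k (r+1) u := by
  intro v hv
  simp only [ball, mem_union]
  exact Or.inl hv

lemma ball_mono {r r' : ℕ} (h : r ≤ r') (u : V) : ball G k r u ⊆ ball G k r' u := by
  induction r' with
  | zero => have : r = 0 := by omega
            subst this; exact Finset.Subset.refl _
  | succ n ih =>
    rcases Nat.lt_or_ge r (n+1) with h' | h'
    · exact (ih (by omega)).trans (ball_subset_succ n u)
    · have : r = n + 1 := by omega
      subst this; exact Finset.Subset.refl _

lemma mem_ball_succ_iff {r : ℕ} {u v : V} :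
    v ∈ ball G k (r+1) u ↔ v ∈ ball G k r u ∨ ∃ z ∈ ball G k r u, DD G k z v := by
  simp [ball]

lemma ball_trans {r s : ℕ} {u v w : V} (hv : v ∈ ball G k r u) (hw : w ∈ ball G k s v) :
    w ∈ ball G k (r + s) u := by
  induction s generalizing w with
  | zero => simp only [ball, mem_singleton] at hw; subst hw; exact ball_mono (by omega) u hv
  | succ n ih =>
    rcases mem_ball_succ_iff.mp hw with h | ⟨z, hz, hzw⟩
    · exact ball_mono (by omega) u (ih h)
    · have hz' := ih hz
      rw [show r + (n+1) = (r + n) + 1 by omega]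
      exact mem_ball_succ_iff.mpr (Or.inr ⟨z, hz', hzw⟩)

lemma ball_front {r : ℕ} {v z u : V} (hD : DD G k v z) (hu : u ∈ ball G k r z) :
    u ∈ ball G k (r+1) v := by
  induction r generalizing u with
  | zero =>
    simp only [ball, mem_singleton] at hu; subst hu
    exact mem_ball_succ_iff.mpr (Or.inr ⟨v, mem_ball_self 0 v, hD⟩)
  | succ n ih =>
    rcases mem_ball_succ_iff.mp hu with h | ⟨y, hy, hyu⟩
    · exact ball_subset_succ _ _ (ih h)
    · exact mem_ball_succ_iff.mpr (Or.inr ⟨y, ih hy, hyu⟩)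

lemma ball_symm {r : ℕ} {u v : V} (h : v ∈ ball G k r u) : u ∈ ball G k r v := by
  induction r generalizing v with
  | zero => simp only [ball, mem_singleton] at h ⊢; exact h.symm
  | succ n ih =>
    rcases mem_ball_succ_iff.mp h with h' | ⟨z, hz, hzv⟩
    · exact ball_subset_succ _ _ (ih h')
    · exact ball_front (DD_symm.mp hzv) (ih hz)

lemma ball_nonX {r : ℕ} {u v : V} (hu : u ∉ XS G k) (hv : v ∈ ball G k r u) : v ∉ XS G k := by
  induction r generalizing v with
  | zero => simp only [ball, mem_singleton] at hv; subst hv; exact hu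
  | succ n ih =>
    rcases mem_ball_succ_iff.mp hv with h | ⟨z, _, hzv⟩
    · exact ih h
    · exact hzv.2.2.1

lemma ball_card {d : ℕ} (hdeg : ∀ z : V, (univ.filter (fun v => DD G k z v)).card ≤ d)
    (r : ℕ) (u : V) : (ball G k r u).card ≤ (d+1)^r := by
  induction r with
  | zero => simp [ball]
  | succ n ih =>
    have hsub : ball G k (n+1) u ⊆
        (ball G k n u).biUnion (fun z => insert z (univ.filter (fun v => DD G k z v))) := by
      intro v hv
      rcases mem_ball_succ_iff.mp hv with h | ⟨z, hz, hzv⟩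
      · exact mem_biUnion.mpr ⟨v, h, mem_insert_self _ _⟩
      · exact mem_biUnion.mpr ⟨z, hz, mem_insert.mpr (Or.inr (by simp [hzv]))⟩
    refine le_trans (card_le_card hsub) (le_trans Finset.card_biUnion_le ?_)
    calc ∑ z ∈ ball G k n u, (insert z (univ.filter (fun v => DD G k z v))).card
        ≤ ∑ _z ∈ ball G k n u, (d+1) := by
          refine Finset.sum_le_sum (fun z _ => ?_)
          refine le_trans (Finset.card_insert_le _ _) ?_
          have := hdeg z
          omega
      _ = (ball G k n u).card * (d+1) := by rw [Finset.sum_const, smul_eq_mul]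
      _ ≤ (d+1)^n * (d+1) := Nat.mul_le_mul_right _ ih
      _ = (d+1)^(n+1) := by ring

/-! ### Partial isomorphisms -/

def Dss (H : Set (V × V)) : Set V := {z | ∃ w, (z, w) ∈ H}
def Rss (H : Set (V × V)) : Set V := {w | ∃ z, (z, w) ∈ H}

variable (G k)

def PIso (H : Set (V × V)) : Prop :=
  (∀ zw ∈ H, zw.1 ∉ XS G k ∧ zw.2 ∉ XS G k ∧ clsF G k zw.1 = clsF G k zw.2 ∧
     ∀ x ∈ XS G k, (G.Adj zw.1 x ↔ G.Adj zw.2 x)) ∧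
  (∀ zw ∈ H, ∀ zw' ∈ H, (zw.1 = zw'.1 ↔ zw.2 = zw'.2) ∧ (DD G k zw.1 zw'.1 ↔ DD G k zw.2 zw'.2))

def Pt (H : Set (V × V)) (r : ℕ) (a b : V) : Prop :=
  ((a, b) ∈ H ∧ ↑(ball G k r a) ⊆ Dss H ∧ ↑(ball G k r b) ⊆ Rss H) ∨
  (a = b ∧ (a ∈ XS G k ∨ (a ∉ Dss H ∧ a ∉ Rss H)))

def Inv {ι : Type} (r : ℕ) (f g : ι → V) : Prop :=
  ∃ H : Set (V × V), PIso G k H ∧ ∀ i, Pt G k H r (f i) (g i)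

variable {G k}

def Hswap (H : Set (V × V)) : Set (V × V) := {zw | (zw.2, zw.1) ∈ H}

lemma Dss_Hswap (H : Set (V × V)) : Dss (Hswap H) = Rss H := by
  ext z; constructor
  · rintro ⟨w, hw⟩; exact ⟨w, hw⟩
  · rintro ⟨w, hw⟩; exact ⟨w, hw⟩

lemma Rss_Hswap (H : Set (V × V)) : Rss (Hswap H) = Dss H := by
  ext z; constructor
  · rintro ⟨w, hw⟩; exact ⟨w, hw⟩
  · rintro ⟨w, hw⟩; exact ⟨w, hw⟩

lemma PIso_swap {H : Set (V × V)} (h : PIso G k H) : PIso G k (Hswap H) := by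
  obtain ⟨h1, h2⟩ := h
  constructor
  · rintro ⟨z, w⟩ hzw
    obtain ⟨a1, a2, a3, a4⟩ := h1 _ hzw
    exact ⟨a2, a1, a3.symm, fun x hx => (a4 x hx).symm⟩
  · rintro ⟨z, w⟩ hzw ⟨z', w'⟩ hzw'
    obtain ⟨b1, b2⟩ := h2 _ hzw _ hzw'
    exact ⟨b1.symm, b2.symm⟩

lemma Pt_swap {H : Set (V × V)} {r : ℕ} {a b : V} (h : Pt G k H r a b) :
    Pt G k (Hswap H) r b a := by
  rcases h with ⟨h1, h2, h3⟩ | ⟨rfl, h⟩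
  · left
    refine ⟨h1, ?_, ?_⟩
    · rw [Dss_Hswap]; exact h3
    · rw [Rss_Hswap]; exact h2
  · right
    refine ⟨rfl, ?_⟩
    rcases h with h | ⟨h1, h2⟩
    · exact Or.inl h
    · right; rw [Dss_Hswap, Rss_Hswap]; exact ⟨h2, h1⟩

lemma Inv_swap {ι : Type} {r : ℕ} {f g : ι → V} (h : Inv G k r f g) : Inv G k r g f := by
  obtain ⟨H, hP, hPt⟩ := h
  exact ⟨Hswap H, PIso_swap hP, fun i => Pt_swap (hPt i)⟩

lemma Pt_mono {H : Set (V × V)} {r r' : ℕ} (hr : r' ≤ r) {a b : V} (h : Pt G k H r a b) :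
    Pt G k H r' a b := by
  rcases h with ⟨h1, h2, h3⟩ | h
  · exact Or.inl ⟨h1, fun z hz => h2 (ball_mono hr a hz), fun z hz => h3 (ball_mono hr b hz)⟩
  · exact Or.inr h

lemma Inv_mono {ι : Type} {r r' : ℕ} (hr : r' ≤ r) {f g : ι → V} (h : Inv G k r f g) :
    Inv G k r' f g := by
  obtain ⟨H, hP, hPt⟩ := h
  exact ⟨H, hP, fun i => Pt_mono hr (hPt i)⟩

lemma Inv_comp {ι ι' : Type} {r : ℕ} {f g : ι → V} (h : Inv G k r f g) (e : ι' → ι) :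
    Inv G k r (f ∘ e) (g ∘ e) := by
  obtain ⟨H, hP, hPt⟩ := h
  exact ⟨H, hP, fun i => hPt (e i)⟩

lemma Inv_congr {ι : Type} {r : ℕ} {f g f' g' : ι → V} (hf : ∀ i, f i = f' i)
    (hg : ∀ i, g i = g' i) (h : Inv G k r f g) : Inv G k r f' g' := by
  obtain ⟨H, hP, hPt⟩ := h
  exact ⟨H, hP, fun i => by rw [← hf i, ← hg i]; exact hPt i⟩

/-- Walk-mapping: a partial isomorphism maps balls inside its domain onto balls. -/
lemma walk_map {H : Set (V × V)} (hP : PIso G k H) {a b : V} (hab : (a, b) ∈ H)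
    {r : ℕ} (hdom : ↑(ball G k r a) ⊆ Dss H) :
    ∀ r' ≤ r, ∀ z ∈ ball G k r' a, ∃ w, (z, w) ∈ H ∧ w ∈ ball G k r' b := by
  intro r' hr'
  induction r' with
  | zero =>
    intro z hz
    simp only [ball, mem_singleton] at hz; subst hz
    exact ⟨b, hab, mem_ball_self 0 b⟩
  | succ n ih =>
    intro z hz
    rcases mem_ball_succ_iff.mp hz with h | ⟨y, hy, hyz⟩
    · obtain ⟨w, hw1, hw2⟩ := ih (by omega) z h
      exact ⟨w, hw1, ball_subset_succ _ _ hw2⟩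
    · obtain ⟨wy, hwy1, hwy2⟩ := ih (by omega) y hy
      have hzdom : z ∈ Dss H := hdom (by
        simpa using (ball_mono hr' a hz))
      obtain ⟨wz, hwz⟩ := hzdom
      have hD := (hP.2 _ hwy1 _ hwz).2.mp hyz
      exact ⟨wz, hwz, mem_ball_succ_iff.mpr (Or.inr ⟨wy, hwy2, hD⟩)⟩


lemma PIso_subset {H H' : Set (V × V)} (hsub : H' ⊆ H) (hP : PIso G k H) : PIso G k H' :=
  ⟨fun zw hzw => hP.1 zw (hsub hzw), fun zw hzw zw' hzw' => hP.2 zw (hsub hzw) zw' (hsub hzw')⟩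

lemma DD_mem_ball_one {z v : V} (h : DD G k z v) : v ∈ ball G k 1 z :=
  mem_ball_succ_iff.mpr (Or.inr ⟨z, mem_ball_self 0 z, h⟩)

/-- Atomic preservation: mixed case (one moved pair, one fixed point). -/
lemma atomic_mixed {H : Set (V × V)} (hP : PIso G k H) {r : ℕ} (hr : 1 ≤ r) {a b w : V}
    (hab : (a, b) ∈ H) (hda : ↑(ball G k r a) ⊆ Dss H) (hdb : ↑(ball G k r b) ⊆ Rss H)
    (hd : w ∈ XS G k ∨ (w ∉ Dss H ∧ w ∉ Rss H)) :
    (a = w ↔ b = w) ∧ (G.Adj a w ↔ G.Adj b w) := by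
  obtain ⟨haX, hbX, hcls, hXadj⟩ := hP.1 _ hab
  rcases hd with hw | ⟨hw1, hw2⟩
  · constructor
    · constructor
      · rintro rfl; exact absurd hw haX
      · rintro rfl; exact absurd hw hbX
    · exact hXadj w hw
  · have haw : a ≠ w := fun h => hw1 (h ▸ ⟨b, hab⟩)
    have hbw : b ≠ w := fun h => hw2 (h ▸ ⟨a, hab⟩)
    refine ⟨⟨fun h => absurd h haw, fun h => absurd h hbw⟩, ?_⟩
    have hDa : ¬ DD G k a w := fun h =>
      hw1 (hda (by simpa using ball_mono hr a (DD_mem_ball_one h)))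
    have hDb : ¬ DD G k b w := fun h =>
      hw2 (hdb (by simpa using ball_mono hr b (DD_mem_ball_one h)))
    by_cases hwX : w ∈ XS G k
    · exact hXadj w hwX
    · rw [adj_reconstruct haw haX hwX, adj_reconstruct hbw hbX hwX]
      have : AP G k a w ↔ AP G k b w := AP_congr hcls rfl
      constructor
      · intro h; exact ⟨fun hA => fun hD => hDb hD, fun _ => this.mp (h.mpr (fun hD => hDa hD))⟩
      · intro h; exact ⟨fun hA => fun hD => hDa hD, fun _ => this.mpr (h.mpr (fun hD => hDb hD))⟩

/-- Atomic preservation. -/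
lemma Inv_atomic {ι : Type} {r : ℕ} (hr : 1 ≤ r) {f g : ι → V} (h : Inv G k r f g)
    (i i' : ι) :
    (f i = f i' ↔ g i = g i') ∧ (G.Adj (f i) (f i') ↔ G.Adj (g i) (g i')) := by
  obtain ⟨H, hP, hPt⟩ := h
  rcases hPt i with ⟨hab, hda, hdb⟩ | ⟨heq, hd⟩ <;>
    rcases hPt i' with ⟨hab', hda', hdb'⟩ | ⟨heq', hd'⟩
  · -- moved, moved
    obtain ⟨h1, h2⟩ := hP.2 _ hab _ hab'
    refine ⟨h1, ?_⟩
    by_cases he : f i = f i'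
    · have : g i = g i' := h1.mp he
      simp [he, this]
    · have he' : g i ≠ g i' := fun hh => he (h1.mpr hh)
      obtain ⟨hX1, hX1', hc1, _⟩ := hP.1 _ hab
      obtain ⟨hX2, hX2', hc2, _⟩ := hP.1 _ hab'
      rw [adj_reconstruct he hX1 hX2, adj_reconstruct he' hX1' hX2']
      have hAP : AP G k (f i) (f i') ↔ AP G k (g i) (g i') := AP_congr hc1 hc2
      constructor
      · intro hh
        exact ⟨fun hA => fun hD => (hh.mp (hAP.mpr hA)) (h2.mpr hD),
          fun hnD => hAP.mp (hh.mpr (fun hD => hnD (h2.mp hD)))⟩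
      · intro hh
        exact ⟨fun hA => fun hD => (hh.mp (hAP.mp hA)) (h2.mp hD),
          fun hnD => hAP.mpr (hh.mpr (fun hD => hnD (h2.mpr hD)))⟩
  · -- moved, diag
    have := atomic_mixed hP hr hab hda hdb hd'
    rw [← heq']
    exact this
  · -- diag, moved
    have := atomic_mixed hP hr hab' hda' hdb' hd
    rw [← heq]
    constructor
    · rw [eq_comm, @eq_comm _ (f i) (g i')]
      exact this.1
    · rw [G.adj_comm (f i) (f i'), G.adj_comm (f i) (g i')]
      exact this.2
  · -- diag, diag
    rw [← heq, ← heq']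
    exact ⟨Iff.rfl, Iff.rfl⟩

/-! ### Ball types -/

variable (G k)

def TEq (r : ℕ) (a b : V) : Prop :=
  ∃ H₀ : Set (V × V), PIso G k H₀ ∧ (a, b) ∈ H₀ ∧
    Dss H₀ = ↑(ball G k r a) ∧ Rss H₀ = ↑(ball G k r b)

variable {G k}

lemma TEq_notX {r : ℕ} {a b : V} (h : TEq G k r a b) : a ∉ XS G k ∧ b ∉ XS G k := by
  obtain ⟨H₀, hP, hab, _, _⟩ := h
  obtain ⟨h1, h2, _, _⟩ := hP.1 _ hab
  exact ⟨h1, h2⟩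

lemma TEq_refl {r : ℕ} {a : V} (ha : a ∉ XS G k) : TEq G k r a a := by
  refine ⟨{zw | zw.1 ∈ ball G k r a ∧ zw.2 = zw.1}, ⟨?_, ?_⟩, ?_, ?_, ?_⟩
  · rintro ⟨z, w⟩ ⟨hz, h⟩
    dsimp at hz h; subst h
    exact ⟨ball_nonX ha hz, ball_nonX ha hz, rfl, fun x _ => Iff.rfl⟩
  · rintro ⟨z, w⟩ ⟨hz, h⟩ ⟨z', w'⟩ ⟨hz', h'⟩
    dsimp at h h'; subst h; subst h'
    exact ⟨Iff.rfl, Iff.rfl⟩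
  · exact ⟨mem_ball_self r a, rfl⟩
  · ext z
    constructor
    · rintro ⟨w, hw, h⟩; dsimp at hw; simpa using hw
    · intro hz; exact ⟨z, by simpa using hz, rfl⟩
  · ext w
    constructor
    · rintro ⟨z, hz, h⟩; dsimp at hz h; subst h; simpa using hz
    · intro hw; exact ⟨w, by simpa using hw, rfl⟩

lemma TEq_symm {r : ℕ} {a b : V} (h : TEq G k r a b) : TEq G k r b a := by
  obtain ⟨H₀, hP, hab, hD, hR⟩ := h
  exact ⟨Hswap H₀, PIso_swap hP, hab, by rw [Dss_Hswap, hR], by rw [Rss_Hswap, hD]⟩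

lemma TEq_of_H {H : Set (V × V)} (hP : PIso G k H) {r : ℕ} {a b : V} (hab : (a, b) ∈ H)
    (hdom : ↑(ball G k r a) ⊆ Dss H) (hran : ↑(ball G k r b) ⊆ Rss H) :
    TEq G k r a b := by
  refine ⟨{zw | zw ∈ H ∧ zw.1 ∈ ball G k r a}, PIso_subset (fun zw h => h.1) hP,
    ⟨hab, mem_ball_self r a⟩, ?_, ?_⟩
  · ext z; constructor
    · rintro ⟨w, hw, hz⟩; simpa using hz
    · intro hz
      simp only [coe_mem, Finset.mem_coe] at hz
      obtain ⟨w, hw⟩ := hdom (by simpa using hz)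
      exact ⟨w, hw, hz⟩
  · ext w; constructor
    · rintro ⟨z, hzw, hz⟩
      obtain ⟨w', hw'1, hw'2⟩ := walk_map hP hab hdom r le_rfl z hz
      have : w = w' := ((hP.2 _ hzw _ hw'1).1.mp rfl)
      subst this; simpa using hw'2
    · intro hw
      have hswap := PIso_swap hP
      have hdomsw : ↑(ball G k r b) ⊆ Dss (Hswap H) := by rw [Dss_Hswap]; exact hran
      obtain ⟨z, hz1, hz2⟩ := walk_map hswap (show (b, a) ∈ Hswap H from hab) hdomsw r le_rfl w
        (by simpa using hw)
      exact ⟨z, hz1, hz2⟩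

lemma TEq_trans {r : ℕ} {a b c : V} (h1 : TEq G k r a b) (h2 : TEq G k r b c) :
    TEq G k r a c := by
  obtain ⟨H₀, hP0, hab, hD0, hR0⟩ := h1
  obtain ⟨H₁, hP1, hbc, hD1, hR1⟩ := h2
  refine ⟨{zw | ∃ y, (zw.1, y) ∈ H₀ ∧ (y, zw.2) ∈ H₁}, ⟨?_, ?_⟩, ⟨b, hab, hbc⟩, ?_, ?_⟩
  · rintro ⟨z, w⟩ ⟨y, hy0, hy1⟩
    obtain ⟨a1, a2, a3, a4⟩ := hP0.1 _ hy0
    obtain ⟨b1, b2, b3, b4⟩ := hP1.1 _ hy1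
    exact ⟨a1, b2, a3.trans b3, fun x hx => (a4 x hx).trans (b4 x hx)⟩
  · rintro ⟨z, w⟩ ⟨y, hy0, hy1⟩ ⟨z', w'⟩ ⟨y', hy0', hy1'⟩
    obtain ⟨a1, a2⟩ := hP0.2 _ hy0 _ hy0'
    obtain ⟨b1, b2⟩ := hP1.2 _ hy1 _ hy1'
    exact ⟨a1.trans b1, a2.trans b2⟩
  · ext z; constructor
    · rintro ⟨w, y, hy0, hy1⟩
      rw [← hD0]; exact ⟨y, hy0⟩
    · intro hz
      rw [← hD0] at hz
      obtain ⟨y, hy⟩ := hz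
      have : y ∈ Rss H₀ := ⟨z, hy⟩
      rw [hR0, ← hD1] at this
      obtain ⟨w, hw⟩ := this
      exact ⟨w, y, hy, hw⟩
  · ext w; constructor
    · rintro ⟨z, y, hy0, hy1⟩
      rw [← hR1]; exact ⟨y, hy1⟩
    · intro hw
      rw [← hR1] at hw
      obtain ⟨y, hy⟩ := hw
      have : y ∈ Dss H₁ := ⟨w, hy⟩
      rw [hD1, ← hR0] at this
      obtain ⟨z, hz⟩ := this
      exact ⟨z, y, hz, hy⟩


/-- The extension (forth) property of the invariant. -/
lemma Inv_extend {ι : Type} {r : ℕ} {f g : ι → V} (h : Inv G k (3*r+1) f g) (a : V) :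
    ∃ b, Inv G k r (fun o : Option ι => o.elim a f) (fun o : Option ι => o.elim b g) := by
  obtain ⟨H, hP, hPt⟩ := h
  set Mv : ι → Prop := fun i => (f i, g i) ∈ H with hMv
  -- resolved point facts
  have hPtc : ∀ i, (Mv i ∧ ↑(ball G k (3*r+1) (f i)) ⊆ Dss H ∧ ↑(ball G k (3*r+1) (g i)) ⊆ Rss H)
      ∨ (¬ Mv i ∧ f i = g i ∧ (f i ∈ XS G k ∨ (f i ∉ Dss H ∧ f i ∉ Rss H))) := by
    intro i
    rcases hPt i with ⟨h1, h2, h3⟩ | ⟨h1, h2⟩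
    · exact Or.inl ⟨h1, h2, h3⟩
    · refine Or.inr ⟨?_, h1, h2⟩
      intro hmem
      rcases h2 with hX | ⟨hD, _⟩
      · exact (hP.1 _ hmem).1 hX
      · exact hD ⟨g i, hmem⟩
  -- mapping helpers
  have hfor : ∀ {c d : V} {s : ℕ}, (c, d) ∈ H → ↑(ball G k s c) ⊆ Dss H →
      ∀ {z w : V}, (z, w) ∈ H → z ∈ ball G k s c → w ∈ ball G k s d := by
    intro c d s hcd hdom z w hzw hz
    obtain ⟨w', hw'1, hw'2⟩ := walk_map hP hcd hdom s le_rfl z hz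
    have : w = w' := (hP.2 _ hzw _ hw'1).1.mp rfl
    rwa [this]
  have hback : ∀ {c d : V} {s : ℕ}, (c, d) ∈ H → ↑(ball G k s d) ⊆ Rss H →
      ∀ {z w : V}, (z, w) ∈ H → w ∈ ball G k s d → z ∈ ball G k s c := by
    intro c d s hcd hran z w hzw hw
    have hsw := PIso_swap hP
    have hdomsw : ↑(ball G k s d) ⊆ Dss (Hswap H) := by rw [Dss_Hswap]; exact hran
    obtain ⟨z', hz'1, hz'2⟩ := walk_map hsw (show (d, c) ∈ Hswap H from hcd) hdomsw s le_rfl w hw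
    have : z = z' := (hsw.2 (w, z) hzw (w, z') hz'1).1.mp rfl
    rwa [this]
  by_cases hC1 : ∃ i, Mv i ∧ a ∈ ball G k (2*r+1) (f i)
  · -- Case 1: a is in the left territory; map it through H
    obtain ⟨i₀, hi₀, ha⟩ := hC1
    obtain ⟨_, hdom₀, hran₀⟩ | ⟨hn, _, _⟩ := hPtc i₀
    swap
    · exact absurd hi₀ hn
    obtain ⟨b, hab⟩ := hdom₀ (by simpa using ball_mono (by omega) (f i₀) ha)
    have hb : b ∈ ball G k (2*r+1) (g i₀) := by
      refine hfor hi₀ (fun z hz => hdom₀ ?_) hab ha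
      simp only [Finset.mem_coe] at hz ⊢
      exact ball_mono (by omega) _ hz
    have hballa : ∀ {z : V}, z ∈ ball G k r a → z ∈ ball G k (3*r+1) (f i₀) := by
      intro z hz
      exact ball_mono (by omega) _ (ball_trans ha hz)
    have hballb : ∀ {w : V}, w ∈ ball G k r b → w ∈ ball G k (3*r+1) (g i₀) := by
      intro w hw
      exact ball_mono (by omega) _ (ball_trans hb hw)
    refine ⟨b, {zw | zw ∈ H ∧ (zw.1 ∈ ball G k r a ∨ ∃ i, Mv i ∧ zw.1 ∈ ball G k r (f i))},
      PIso_subset (fun _ hh => hh.1) hP, ?_⟩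
    have hDsub : Dss {zw | zw ∈ H ∧ (zw.1 ∈ ball G k r a ∨ ∃ i, Mv i ∧ zw.1 ∈ ball G k r (f i))}
        ⊆ Dss H := fun z ⟨w, hw⟩ => ⟨w, hw.1⟩
    have hRsub : Rss {zw | zw ∈ H ∧ (zw.1 ∈ ball G k r a ∨ ∃ i, Mv i ∧ zw.1 ∈ ball G k r (f i))}
        ⊆ Rss H := fun w ⟨z, hz⟩ => ⟨z, hz.1⟩
    rintro (_ | i)
    · -- the new pair
      left
      refine ⟨⟨hab, Or.inl (mem_ball_self r a)⟩, ?_, ?_⟩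
      · intro z hz
        simp only [Finset.mem_coe] at hz
        obtain ⟨w, hw⟩ := hdom₀ (by simpa using hballa hz)
        exact ⟨w, ⟨hw, Or.inl hz⟩⟩
      · intro w hw
        simp only [Finset.mem_coe] at hw
        obtain ⟨z, hz⟩ := hran₀ (by simpa using hballb hw)
        have hza : z ∈ ball G k r a := by
          refine hback hab ?_ hz hw
          intro w' hw'
          simp only [Finset.mem_coe] at hw'
          exact hran₀ (by simpa using hballb hw')
        exact ⟨z, ⟨hz, Or.inl hza⟩⟩
    · -- old points
      rcases hPtc i with ⟨hm, hdom, hran⟩ | ⟨hnm, heq, hout⟩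
      · left
        refine ⟨⟨hm, Or.inr ⟨i, hm, mem_ball_self r (f i)⟩⟩, ?_, ?_⟩
        · intro z hz
          simp only [Finset.mem_coe] at hz
          obtain ⟨w, hw⟩ := hdom (by simpa using ball_mono (by omega) _ hz)
          exact ⟨w, ⟨hw, Or.inr ⟨i, hm, hz⟩⟩⟩
        · intro w hw
          simp only [Finset.mem_coe] at hw
          obtain ⟨z, hz⟩ := hran (by simpa using ball_mono (by omega) _ hw)
          have hzf : z ∈ ball G k r (f i) := by
            refine hback hm ?_ hz hw
            intro w' hw'
            simp only [Finset.mem_coe] at hw'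
            exact hran (by simpa using ball_mono (by omega) _ hw')
          exact ⟨z, ⟨hz, Or.inr ⟨i, hm, hzf⟩⟩⟩
      · right
        refine ⟨heq, ?_⟩
        rcases hout with hX | ⟨hD, hR⟩
        · exact Or.inl hX
        · exact Or.inr ⟨fun hh => hD (hDsub hh), fun hh => hR (hRsub hh)⟩
  · by_cases hC2 : ∃ i, Mv i ∧ a ∈ ball G k (2*r+1) (g i)
    · -- Case 2: a is in the right territory; find a fresh twin via counting
      obtain ⟨i₁, hi₁, ha⟩ := hC2
      obtain ⟨_, hdom₁, hran₁⟩ | ⟨hn, _, _⟩ := hPtc i₁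
      swap
      · exact absurd hi₁ hn
      have haX : a ∉ XS G k := ball_nonX (hP.1 _ hi₁).2.1 ha
      -- any fixed (diagonal) point is far from a
      have hdiagfar : ∀ i, ¬ Mv i → f i ∉ ball G k r a := by
        intro i hnm hmem
        rcases hPtc i with ⟨hm, _, _⟩ | ⟨_, _, hout⟩
        · exact hnm hm
        have hfR : f i ∈ Rss H := hran₁ (by
          simp only [Finset.mem_coe]
          exact ball_mono (show 2*r+1+r ≤ 3*r+1 by omega) _ (ball_trans ha hmem))
        rcases hout with hX | ⟨_, hR⟩
        · exact ball_nonX haX hmem hX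
        · exact hR hfR
      -- the partial inverse of H
      set F : V → V := fun v => if h : ∃ z, (z, v) ∈ H then Classical.choose h else v with hFdef
      have hFspec : ∀ v, v ∈ Rss H → (F v, v) ∈ H := by
        intro v hv
        obtain ⟨z, hz⟩ := hv
        simp only [hFdef]
        rw [dif_pos ⟨z, hz⟩]
        exact Classical.choose_spec (⟨z, hz⟩ : ∃ z, (z, v) ∈ H)
      -- existence of a good fresh partner
      have hgood : ∃ b, TEq G k r a b ∧ (∀ i, Mv i → b ∉ ball G k (2*r+1) (g i)) ∧
          (∀ i, ¬ Mv i → b ∉ ball G k r (f i)) := by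
        by_contra hng
        push_neg at hng
        set A' : Finset V := univ.filter (fun v => TEq G k r a v ∧
          (∃ i, Mv i ∧ v ∈ ball G k (2*r+1) (f i)) ∧
          (∀ i, ¬ Mv i → v ∉ ball G k r (f i))) with hA'
        set B' : Finset V := univ.filter (fun v => TEq G k r a v ∧
          (∃ i, Mv i ∧ v ∈ ball G k (2*r+1) (g i)) ∧
          (∀ i, ¬ Mv i → v ∉ ball G k r (f i))) with hB'
        have hsub : A' ⊆ B' := by
          intro v hv
          simp only [hA', hB', mem_filter, mem_univ, true_and] at hv ⊢
          obtain ⟨h1, _, h3⟩ := hv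
          refine ⟨h1, ?_, h3⟩
          by_contra hne
          push_neg at hne
          obtain ⟨j, hj1, hj2⟩ := hng v h1 hne
          exact h3 j hj1 hj2
        have hBmem : ∀ v ∈ B', v ∈ Rss H ∧
            ∃ i, Mv i ∧ F v ∈ ball G k (2*r+1) (f i) ∧ v ∈ ball G k (2*r+1) (g i) := by
          intro v hv
          simp only [hB', mem_filter, mem_univ, true_and] at hv
          obtain ⟨hT, ⟨i, hm, hvb⟩, hthird⟩ := hv
          rcases hPtc i with ⟨_, hdomi, hrani⟩ | ⟨hnm, _, _⟩
          swap
          · exact absurd hm hnm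
          have hransub : ↑(ball G k (2*r+1) (g i)) ⊆ Rss H := by
            intro w' hw'
            simp only [Finset.mem_coe] at hw'
            exact hrani (by simpa using ball_mono (by omega) _ hw')
          have hvR : v ∈ Rss H := hransub (by simpa using hvb)
          have hFv : F v ∈ ball G k (2*r+1) (f i) := hback hm hransub (hFspec v hvR) hvb
          exact ⟨hvR, i, hm, hFv, hvb⟩
        have hmapsto : ∀ v ∈ B', F v ∈ A' := by
          intro v hv
          obtain ⟨hvR, i, hm, hFv, hvb⟩ := hBmem v hv
          simp only [hB', mem_filter, mem_univ, true_and] at hv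
          obtain ⟨hT, _, hthird⟩ := hv
          rcases hPtc i with ⟨_, hdomi, hrani⟩ | ⟨hnm, _, _⟩
          swap
          · exact absurd hm hnm
          have hdomsub : ↑(ball G k r (F v)) ⊆ Dss H := by
            intro z hz
            simp only [Finset.mem_coe] at hz
            exact hdomi (by
              simp only [Finset.mem_coe]
              exact ball_mono (show 2*r+1+r ≤ 3*r+1 by omega) _ (ball_trans hFv hz))
          have hransub : ↑(ball G k r v) ⊆ Rss H := by
            intro w hw
            simp only [Finset.mem_coe] at hw
            exact hrani (by
              simp only [Finset.mem_coe]
              exact ball_mono (show 2*r+1+r ≤ 3*r+1 by omega) _ (ball_trans hvb hw))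
          have hTF : TEq G k r a (F v) :=
            TEq_trans hT (TEq_symm (TEq_of_H hP (hFspec v hvR) hdomsub hransub))
          have hthirdF : ∀ j, ¬ Mv j → F v ∉ ball G k r (f j) := by
            intro j hj hmem
            rcases hPtc j with ⟨hm', _, _⟩ | ⟨_, _, hout⟩
            · exact hj hm'
            have hfD : f j ∈ Dss H := hdomsub (by
              simp only [Finset.mem_coe]
              exact ball_symm hmem)
            rcases hout with hX | ⟨hD, _⟩
            · exact ball_nonX (hP.1 _ (hFspec v hvR)).1 (ball_symm hmem) hX
            · exact hD hfD
          simp only [hA', mem_filter, mem_univ, true_and]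
          exact ⟨hTF, ⟨i, hm, hFv⟩, hthirdF⟩
        have hinj : Set.InjOn F ↑B' := by
          intro v hv v' hv' heqF
          have h1 := (hBmem v (by simpa using hv)).1
          have h2 := (hBmem v' (by simpa using hv')).1
          exact (hP.2 _ (hFspec v h1) _ (hFspec v' h2)).1.mp heqF
        have hcard : B'.card ≤ A'.card := Finset.card_le_card_of_injOn F hmapsto hinj
        have hAB : A' = B' := Finset.eq_of_subset_of_card_le hsub hcard
        have haB : a ∈ B' := by
          simp only [hB', mem_filter, mem_univ, true_and]
          refine ⟨TEq_refl haX, ⟨i₁, hi₁, ha⟩, ?_⟩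
          intro j hj hmem
          exact hdiagfar j hj (ball_symm hmem)
        rw [← hAB] at haB
        simp only [hA', mem_filter, mem_univ, true_and] at haB
        exact hC1 haB.2.1
      obtain ⟨b, hTEqb, hbg, hbf⟩ := hgood
      obtain ⟨H₀, hP0, hab0, hD0, hR0⟩ := hTEqb
      have hmemD0 : ∀ {z w : V}, (z, w) ∈ H₀ → z ∈ ball G k r a ∧ w ∈ ball G k r b := by
        intro z w hzw
        constructor
        · have : z ∈ Dss H₀ := ⟨w, hzw⟩
          rw [hD0] at this
          simpa using this
        · have : w ∈ Rss H₀ := ⟨z, hzw⟩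
          rw [hR0] at this
          simpa using this
      -- cross facts
      have hcross : ∀ {z w z' w' : V}, (z, w) ∈ H → (∃ i, Mv i ∧ z ∈ ball G k r (f i)) →
          (z', w') ∈ H₀ → z ≠ z' ∧ w ≠ w' ∧ ¬ DD G k z z' ∧ ¬ DD G k w w' := by
        rintro z w z' w' hzw ⟨i, hm, hz⟩ hzw0
        obtain ⟨hz', hw'⟩ := hmemD0 hzw0
        rcases hPtc i with ⟨_, hdomi, hrani⟩ | ⟨hnm, _, _⟩
        swap
        · exact absurd hm hnm
        have hw : w ∈ ball G k r (g i) := by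
          refine hfor hm ?_ hzw hz
          intro z'' hz''
          simp only [Finset.mem_coe] at hz''
          exact hdomi (by simpa using ball_mono (by omega) _ hz'')
        refine ⟨?_, ?_, ?_, ?_⟩
        · rintro rfl
          exact hC1 ⟨i, hm, ball_mono (show r+r ≤ 2*r+1 by omega) _
            (ball_trans hz (ball_symm hz'))⟩
        · rintro rfl
          exact hbg i hm (ball_mono (show r+r ≤ 2*r+1 by omega) _
            (ball_trans hw (ball_symm hw')))
        · intro hDD
          refine hC1 ⟨i, hm, ?_⟩
          have h1 : z' ∈ ball G k (r+1) (f i) := ball_trans hz (DD_mem_ball_one hDD)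
          have h2 : a ∈ ball G k ((r+1)+r) (f i) := ball_trans h1 (ball_symm hz')
          exact ball_mono (show (r+1)+r ≤ 2*r+1 by omega) _ h2
        · intro hDD
          refine hbg i hm ?_
          have h1 : w' ∈ ball G k (r+1) (g i) := ball_trans hw (DD_mem_ball_one hDD)
          have h2 : b ∈ ball G k ((r+1)+r) (g i) := ball_trans h1 (ball_symm hw')
          exact ball_mono (show (r+1)+r ≤ 2*r+1 by omega) _ h2
      refine ⟨b, {zw | (zw ∈ H ∧ ∃ i, Mv i ∧ zw.1 ∈ ball G k r (f i)) ∨ zw ∈ H₀},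
        ⟨?_, ?_⟩, ?_⟩
      · rintro zw (⟨hzw, _⟩ | hzw)
        · exact hP.1 _ hzw
        · exact hP0.1 _ hzw
      · rintro ⟨z, w⟩ (⟨hzw, hcond⟩ | hzw0) ⟨z', w'⟩ (⟨hzw', hcond'⟩ | hzw0')
        · exact hP.2 _ hzw _ hzw'
        · obtain ⟨hne, hne', hnd, hnd'⟩ := hcross hzw hcond hzw0'
          exact ⟨iff_of_false hne hne', iff_of_false hnd hnd'⟩
        · obtain ⟨hne, hne', hnd, hnd'⟩ := hcross hzw' hcond' hzw0
          exact ⟨iff_of_false (Ne.symm hne) (Ne.symm hne'),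
            iff_of_false (fun h => hnd (DD_symm.mp h)) (fun h => hnd' (DD_symm.mp h))⟩
        · exact hP0.2 _ hzw0 _ hzw0'
      · rintro (_ | i)
        · left
          refine ⟨Or.inr hab0, ?_, ?_⟩
          · intro z hz
            simp only [Finset.mem_coe] at hz
            have : z ∈ Dss H₀ := by rw [hD0]; simpa using hz
            obtain ⟨w, hw⟩ := this
            exact ⟨w, Or.inr hw⟩
          · intro w hw
            simp only [Finset.mem_coe] at hw
            have : w ∈ Rss H₀ := by rw [hR0]; simpa using hw
            obtain ⟨z, hz⟩ := this
            exact ⟨z, Or.inr hz⟩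
        · rcases hPtc i with ⟨hm, hdom, hran⟩ | ⟨hnm, heq, hout⟩
          · left
            refine ⟨Or.inl ⟨hm, ⟨i, hm, mem_ball_self r (f i)⟩⟩, ?_, ?_⟩
            · intro z hz
              simp only [Finset.mem_coe] at hz
              obtain ⟨w, hw⟩ := hdom (by simpa using ball_mono (by omega) _ hz)
              exact ⟨w, Or.inl ⟨hw, ⟨i, hm, hz⟩⟩⟩
            · intro w hw
              simp only [Finset.mem_coe] at hw
              obtain ⟨z, hz⟩ := hran (by simpa using ball_mono (by omega) _ hw)
              have hzf : z ∈ ball G k r (f i) := by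
                refine hback hm ?_ hz hw
                intro w' hw'
                simp only [Finset.mem_coe] at hw'
                exact hran (by simpa using ball_mono (by omega) _ hw')
              exact ⟨z, Or.inl ⟨hz, ⟨i, hm, hzf⟩⟩⟩
          · right
            refine ⟨heq, ?_⟩
            rcases hout with hX | ⟨hD, hR⟩
            · exact Or.inl hX
            right
            constructor
            · rintro ⟨w, (⟨hw, _⟩ | hw0)⟩
              · exact hD ⟨w, hw⟩
              · exact hdiagfar i hnm (hmemD0 hw0).1
            · rintro ⟨z, (⟨hz, _⟩ | hz0)⟩
              · exact hR ⟨z, hz⟩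
              · exact hbf i hnm (ball_symm (hmemD0 hz0).2)
    · -- Case 3: a is far from all moved points; keep it fixed
      refine ⟨a, {zw | zw ∈ H ∧ ∃ i, Mv i ∧ zw.1 ∈ ball G k r (f i)},
        PIso_subset (fun _ hh => hh.1) hP, ?_⟩
      have hDsub : Dss {zw | zw ∈ H ∧ ∃ i, Mv i ∧ zw.1 ∈ ball G k r (f i)} ⊆ Dss H :=
        fun z ⟨w, hw⟩ => ⟨w, hw.1⟩
      have hRsub : Rss {zw | zw ∈ H ∧ ∃ i, Mv i ∧ zw.1 ∈ ball G k r (f i)} ⊆ Rss H :=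
        fun w ⟨z, hz⟩ => ⟨z, hz.1⟩
      rintro (_ | i)
      · right
        refine ⟨rfl, ?_⟩
        by_cases haX : a ∈ XS G k
        · exact Or.inl haX
        right
        constructor
        · rintro ⟨w, hw, i, hm, hmem⟩
          exact hC1 ⟨i, hm, ball_mono (by omega) _ hmem⟩
        · rintro ⟨z, hz, i, hm, hmem⟩
          rcases hPtc i with ⟨_, hdom, _⟩ | ⟨hnm, _, _⟩
          swap
          · exact absurd hm hnm
          have : a ∈ ball G k r (g i) := by
            refine hfor hm ?_ hz hmem
            intro z' hz'
            simp only [Finset.mem_coe] at hz'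
            exact hdom (by simpa using ball_mono (by omega) _ hz')
          exact hC2 ⟨i, hm, ball_mono (by omega) _ this⟩
      · rcases hPtc i with ⟨hm, hdom, hran⟩ | ⟨hnm, heq, hout⟩
        · left
          refine ⟨⟨hm, ⟨i, hm, mem_ball_self r (f i)⟩⟩, ?_, ?_⟩
          · intro z hz
            simp only [Finset.mem_coe] at hz
            obtain ⟨w, hw⟩ := hdom (by simpa using ball_mono (by omega) _ hz)
            exact ⟨w, ⟨hw, ⟨i, hm, hz⟩⟩⟩
          · intro w hw
            simp only [Finset.mem_coe] at hw
            obtain ⟨z, hz⟩ := hran (by simpa using ball_mono (by omega) _ hw)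
            have hzf : z ∈ ball G k r (f i) := by
              refine hback hm ?_ hz hw
              intro w' hw'
              simp only [Finset.mem_coe] at hw'
              exact hran (by simpa using ball_mono (by omega) _ hw')
            exact ⟨z, ⟨hz, ⟨i, hm, hzf⟩⟩⟩
        · right
          refine ⟨heq, ?_⟩
          rcases hout with hX | ⟨hD, hR⟩
          · exact Or.inl hX
          · exact Or.inr ⟨fun hh => hD (hDsub hh), fun hh => hR (hRsub hh)⟩


/-! ### Quantifier depth and the EF theorem -/

end Ctx

def qdepth : {n : ℕ} → Language.graph.BoundedFormula (Fin 2) n → ℕ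
  | _, .falsum => 0
  | _, .equal _ _ => 0
  | _, .rel _ _ => 0
  | _, .imp φ₁ φ₂ => max (qdepth φ₁) (qdepth φ₂)
  | _, .all φ => qdepth φ + 1

def radOf : ℕ → ℕ
  | 0 => 1
  | (d+1) => 3 * radOf d + 1

lemma radOf_pos (d : ℕ) : 1 ≤ radOf d := by
  cases d <;> simp [radOf] <;> omega

lemma radOf_mono : Monotone radOf := by
  have h : ∀ d, radOf d ≤ radOf (d+1) := by
    intro d
    have := radOf_pos d
    simp [radOf]
    omega
  exact monotone_nat_of_le_succ h

lemma graph_term_eq_var {β : Type*} (t : Language.graph.Term β) : ∃ i, t = .var i := by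
  cases t with
  | var i => exact ⟨i, rfl⟩
  | func f ts => exact f.elim

section Ctx2

variable {V : Type} [Fintype V] (G : SimpleGraph V) (k : ℕ)

lemma elim_snoc_eq {n : ℕ} (v : Fin 2 → V) (xs : Fin n → V) (a : V) :
    ∀ i, ((fun o : Option (Fin 2 ⊕ Fin n) => o.elim a (Sum.elim v xs)) ∘
      (Sum.elim (fun j => some (Sum.inl j)) (Fin.lastCases none (fun j' => some (Sum.inr j')))))
      i = Sum.elim v (Fin.snoc xs a) i := by
  rintro (j | j)
  · rfl
  · refine Fin.lastCases ?_ ?_ j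
    · simp [Function.comp]
    · intro j'
      simp [Function.comp]

variable {G k}

theorem EF_main : ∀ {n : ℕ} (φ : Language.graph.BoundedFormula (Fin 2) n)
    (v v' : Fin 2 → V) (xs xs' : Fin n → V),
    Inv G k (radOf (qdepth φ)) (Sum.elim v xs) (Sum.elim v' xs') →
    (@FirstOrder.Language.BoundedFormula.Realize _ V G.structure (Fin 2) n φ v xs ↔
      @FirstOrder.Language.BoundedFormula.Realize _ V G.structure (Fin 2) n φ v' xs') := by
  intro n φ
  letI := G.structure
  induction φ with
  | falsum =>
    intro v v' xs xs' hInv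
    exact Iff.rfl
  | equal t₁ t₂ =>
    intro v v' xs xs' hInv
    obtain ⟨i₁, rfl⟩ := graph_term_eq_var t₁
    obtain ⟨i₂, rfl⟩ := graph_term_eq_var t₂
    have h := (Inv_atomic (radOf_pos _) hInv i₁ i₂).1
    show Term.realize (Sum.elim v xs) (.var i₁) = Term.realize (Sum.elim v xs) (.var i₂) ↔
      Term.realize (Sum.elim v' xs') (.var i₁) = Term.realize (Sum.elim v' xs') (.var i₂)
    simpa [Term.realize] using h
  | rel R ts =>
    intro v v' xs xs' hInv
    cases R with
    | adj =>
      obtain ⟨i₁, h₁⟩ := graph_term_eq_var (ts 0)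
      obtain ⟨i₂, h₂⟩ := graph_term_eq_var (ts 1)
      have hadj := (Inv_atomic (radOf_pos _) hInv i₁ i₂).2
      show G.Adj (Term.realize (Sum.elim v xs) (ts 0)) (Term.realize (Sum.elim v xs) (ts 1)) ↔
        G.Adj (Term.realize (Sum.elim v' xs') (ts 0)) (Term.realize (Sum.elim v' xs') (ts 1))
      rw [h₁, h₂]
      simpa [Term.realize] using hadj
  | imp φ₁ φ₂ ih₁ ih₂ =>
    intro v v' xs xs' hInv
    have h₁ := ih₁ v v' xs xs' (Inv_mono (radOf_mono (le_max_left _ _)) hInv)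
    have h₂ := ih₂ v v' xs xs' (Inv_mono (radOf_mono (le_max_right _ _)) hInv)
    show (_ → _) ↔ (_ → _)
    rw [h₁, h₂]
  | all φ ih =>
    intro v v' xs xs' hInv
    have hInv' : Inv G k (3 * radOf (qdepth φ) + 1) (Sum.elim v xs) (Sum.elim v' xs') := hInv
    rw [BoundedFormula.realize_all, BoundedFormula.realize_all]
    constructor
    · intro h a
      obtain ⟨b, hb⟩ := Inv_extend (Inv_swap hInv') a
      have hb' : Inv G k (radOf (qdepth φ)) (Sum.elim v' (Fin.snoc xs' a))
          (Sum.elim v (Fin.snoc xs b)) :=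
        Inv_congr (elim_snoc_eq v' xs' a) (elim_snoc_eq v xs b)
          (Inv_comp hb (Sum.elim (fun j => some (Sum.inl j))
            (Fin.lastCases none (fun j' => some (Sum.inr j')))))
      exact (ih v v' (Fin.snoc xs b) (Fin.snoc xs' a) (Inv_swap hb')).mp (h b)
    · intro h a
      obtain ⟨b, hb⟩ := Inv_extend hInv' a
      have hb' : Inv G k (radOf (qdepth φ)) (Sum.elim v (Fin.snoc xs a))
          (Sum.elim v' (Fin.snoc xs' b)) :=
        Inv_congr (elim_snoc_eq v xs a) (elim_snoc_eq v' xs' b)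
          (Inv_comp hb (Sum.elim (fun j => some (Sum.inl j))
            (Fin.lastCases none (fun j' => some (Sum.inr j')))))
      exact (ih v v' (Fin.snoc xs a) (Fin.snoc xs' b) hb').mpr (h b)

end Ctx2


section Interp

variable {V : Type} [Fintype V] {G : SimpleGraph V} {k : ℕ} (ψ : Language.graph.Formula (Fin 2))

lemma TEq_interp_adj {u u' : V} (h : TEq G k (radOf (qdepth ψ)) u u') {w : V}
    (hw : w ∉ ball G k (radOf (qdepth ψ)) u) (hw' : w ∉ ball G k (radOf (qdepth ψ)) u') :
    ((interpGraphPlain G ψ).Adj u w ↔ (interpGraphPlain G ψ).Adj u' w) := by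
  set R := radOf (qdepth ψ) with hR
  obtain ⟨H₀, hP0, hab0, hD0, hR0⟩ := h
  have hPtu : Pt G k H₀ R u u' := by
    left
    refine ⟨hab0, ?_, ?_⟩
    · rw [hD0]
    · rw [hR0]
  have hPtw : Pt G k H₀ R w w := by
    right
    refine ⟨rfl, ?_⟩
    by_cases hX : w ∈ XS G k
    · exact Or.inl hX
    · refine Or.inr ⟨?_, ?_⟩
      · rw [hD0]; simpa using hw
      · rw [hR0]; simpa using hw'
  have hInv1 : Inv G k R (Sum.elim ![u, w] (default : Fin 0 → V))
      (Sum.elim ![u', w] default) := by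
    refine ⟨H₀, hP0, ?_⟩
    rintro (j | j)
    · fin_cases j
      · exact hPtu
      · exact hPtw
    · exact j.elim0
  have hInv2 : Inv G k R (Sum.elim ![w, u] (default : Fin 0 → V))
      (Sum.elim ![w, u'] default) := by
    refine ⟨H₀, hP0, ?_⟩
    rintro (j | j)
    · fin_cases j
      · exact hPtw
      · exact hPtu
    · exact j.elim0
  have hEF1 := EF_main (ψ : Language.graph.BoundedFormula (Fin 2) 0) ![u, w] ![u', w]
    default default hInv1
  have hEF2 := EF_main (ψ : Language.graph.BoundedFormula (Fin 2) 0) ![w, u] ![w, u']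
    default default hInv2
  have hneu : u ≠ w := fun hh => hw (hh ▸ mem_ball_self R u)
  have hneu' : u' ≠ w := fun hh => hw' (hh ▸ mem_ball_self R u')
  show (u ≠ w ∧ _) ↔ (u' ≠ w ∧ _)
  constructor
  · rintro ⟨-, h2⟩
    exact ⟨hneu', h2.imp (fun hh => hEF1.mp hh) (fun hh => hEF2.mp hh)⟩
  · rintro ⟨-, h2⟩
    exact ⟨hneu, h2.imp (fun hh => hEF1.mpr hh) (fun hh => hEF2.mpr hh)⟩

lemma TEq_interp_nearTwin {u u' : V} (h : TEq G k (radOf (qdepth ψ)) u u') {N : ℕ}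
    (hN : ∀ x : V, (ball G k (radOf (qdepth ψ)) x).card ≤ N) :
    nearTwin (interpGraphPlain G ψ) (2 * N) u u' := by
  set R := radOf (qdepth ψ) with hR
  have hsub : symmDiff ((interpGraphPlain G ψ).neighborSet u)
      ((interpGraphPlain G ψ).neighborSet u') ⊆ ↑(ball G k R u ∪ ball G k R u') := by
    intro w hwmem
    by_contra hwb
    simp only [Finset.coe_union, Set.mem_union, Finset.mem_coe, not_or] at hwb
    have hiff := TEq_interp_adj ψ h hwb.1 hwb.2
    rw [Set.mem_symmDiff] at hwmem
    simp only [SimpleGraph.mem_neighborSet] at hwmem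
    rcases hwmem with ⟨h1, h2⟩ | ⟨h1, h2⟩
    · exact h2 (hiff.mp h1)
    · exact h2 (hiff.mpr h1)
  rw [nearTwin]
  refine le_trans (Set.ncard_le_ncard hsub (Set.toFinite _)) ?_
  rw [Set.ncard_coe_finset]
  refine le_trans (Finset.card_union_le _ _) ?_
  have := hN u
  have := hN u'
  omega

end Interp


/-! ### Encoding ball types -/

lemma iteTF_eq {P Q : Prop} [Decidable P] [Decidable Q]
    (h : (if P then true else false) = (if Q then true else false)) : P ↔ Q := by
  by_cases hP : P <;> by_cases hQ : Q <;> simp [hP, hQ] at h ⊢ <;> tauto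

abbrev Code (N P Xb : ℕ) : Type :=
  (Fin (N+1) → Fin (N+1) → Bool) × (Fin (N+1) → Option (Fin P × (Fin Xb → Bool))) × Fin (N+1)

section Encoding

variable {V : Type} [Fintype V] (G : SimpleGraph V) (k : ℕ) (R N P Xb : ℕ)
  (cmap : V → Fin P) (xmap : Fin Xb → Option V)

/-- Partial inverse of the enumeration of the ball of `u`. -/
noncomputable def binv (u : V) (i : Fin (N+1)) : Option V :=
  if h : (i : ℕ) < (ball G k R u).card then
    some ((ball G k R u).equivFin.symm ⟨i, h⟩ : V)
  else none

/-- The code of the `R`-ball of a vertex. -/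
noncomputable def enc (u : V) : Code N P Xb :=
  ⟨fun i j => if (∃ z w, binv G k R N u i = some z ∧ binv G k R N u j = some w ∧ DD G k z w)
      then true else false,
   fun i => (binv G k R N u i).map (fun z => (cmap z,
      fun jx => if (∃ x, xmap jx = some x ∧ G.Adj z x) then true else false)),
   if h : (ball G k R u).card ≤ N + 1 then
     Fin.castLE h ((ball G k R u).equivFin ⟨u, mem_ball_self R u⟩)
   else ⟨0, by omega⟩⟩

variable {G k R N P Xb} {cmap : V → Fin P} {xmap : Fin Xb → Option V}

lemma binv_eq_some {u z : V} {i : Fin (N+1)} (hz : z ∈ ball G k R u)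
    (hi : ((ball G k R u).equivFin ⟨z, hz⟩ : ℕ) = (i : ℕ)) :
    binv G k R N u i = some z := by
  have hlt : (i : ℕ) < (ball G k R u).card := hi ▸ ((ball G k R u).equivFin ⟨z, hz⟩).isLt
  rw [binv, dif_pos hlt]
  congr 1
  have : (⟨(i : ℕ), hlt⟩ : Fin (ball G k R u).card) = (ball G k R u).equivFin ⟨z, hz⟩ :=
    Fin.ext hi.symm
  rw [this]
  simp

lemma binv_some_mem {u z : V} {i : Fin (N+1)} (h : binv G k R N u i = some z) :
    ∃ (hz : z ∈ ball G k R u), ((ball G k R u).equivFin ⟨z, hz⟩ : ℕ) = (i : ℕ) := by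
  rw [binv] at h
  split_ifs at h with hlt
  · have hz : z ∈ ball G k R u := by
      rw [← Option.some.inj h]
      exact Finset.coe_mem _
    refine ⟨hz, ?_⟩
    have : (⟨z, hz⟩ : {x // x ∈ ball G k R u}) = (ball G k R u).equivFin.symm ⟨i, hlt⟩ :=
      Subtype.ext (by simp [← Option.some.inj h])
    rw [this]
    simp

lemma binv_inj {u z : V} {i i' : Fin (N+1)} (h : binv G k R N u i = some z)
    (h' : binv G k R N u i' = some z) : i = i' := by
  obtain ⟨hz, hi⟩ := binv_some_mem h
  obtain ⟨hz', hi'⟩ := binv_some_mem h'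
  apply Fin.ext
  rw [← hi, ← hi']

/-- Equal codes give isomorphic balls. -/
lemma enc_TEq (hc : ∀ u v : V, cmap u = cmap v → clsF G k u = clsF G k v)
    (hx : ∀ x ∈ XS G k, ∃ j : Fin Xb, xmap j = some x)
    (hcard : ∀ u : V, (ball G k R u).card ≤ N)
    {u u' : V} (hu : u ∉ XS G k) (hu' : u' ∉ XS G k)
    (henc : enc G k R N P Xb cmap xmap u = enc G k R N P Xb cmap xmap u') :
    TEq G k R u u' := by
  have hmat := congrArg (fun c : Code N P Xb => c.1) henc
  have hdat := congrArg (fun c : Code N P Xb => c.2.1) henc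
  have hcen := congrArg (fun c : Code N P Xb => c.2.2) henc
  simp only [enc] at hmat hdat hcen
  -- transfer of elements along equal codes
  have hfwd : ∀ {z : V} {i : Fin (N+1)}, binv G k R N u i = some z →
      ∃ w, binv G k R N u' i = some w := by
    intro z i h
    have := congrFun hdat i
    rw [h] at this
    simp only [Option.map_some] at this
    cases hw : binv G k R N u' i with
    | none => rw [hw] at this; simp at this
    | some w => exact ⟨w, rfl⟩
  have hbwd : ∀ {w : V} {i : Fin (N+1)}, binv G k R N u' i = some w →
      ∃ z, binv G k R N u i = some z := by
    intro w i h
    have := congrFun hdat i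
    rw [h] at this
    cases hz : binv G k R N u i with
    | none => rw [hz] at this; simp at this
    | some z => exact ⟨z, rfl⟩
  refine ⟨{zw | ∃ i, binv G k R N u i = some zw.1 ∧ binv G k R N u' i = some zw.2},
    ⟨?_, ?_⟩, ?_, ?_, ?_⟩
  · -- I1
    rintro ⟨z, w⟩ ⟨i, hz, hw⟩
    have hzball := (binv_some_mem hz).choose
    have hwball := (binv_some_mem hw).choose
    have hdati := congrFun hdat i
    rw [hz, hw] at hdati
    simp only [Option.map_some, Option.some.injEq, Prod.mk.injEq] at hdati
    refine ⟨ball_nonX hu hzball, ball_nonX hu' hwball, hc z w hdati.1, ?_⟩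
    intro x hxX
    obtain ⟨j, hj⟩ := hx x hxX
    have hbool := congrFun hdati.2 j
    have hiff := iteTF_eq hbool
    constructor
    · intro hadj
      obtain ⟨x', hx'1, hx'2⟩ := hiff.mp ⟨x, hj, hadj⟩
      rwa [show x' = x from Option.some.inj (hx'1.symm.trans hj)] at hx'2
    · intro hadj
      obtain ⟨x', hx'1, hx'2⟩ := hiff.mpr ⟨x, hj, hadj⟩
      rwa [show x' = x from Option.some.inj (hx'1.symm.trans hj)] at hx'2
  · -- I2
    rintro ⟨z, w⟩ ⟨i, hz, hw⟩ ⟨z', w'⟩ ⟨i', hz', hw'⟩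
    constructor
    · constructor
      · rintro rfl
        have : i = i' := binv_inj hz hz'
        subst this
        exact Option.some.inj (hw ▸ hw')
      · rintro rfl
        have : i = i' := binv_inj hw hw'
        subst this
        exact Option.some.inj (hz ▸ hz')
    · have hmatii := iteTF_eq (congrFun (congrFun hmat i) i')
      constructor
      · intro hDD
        obtain ⟨w₀, w₀', h1, h2, h3⟩ := hmatii.mp ⟨z, z', hz, hz', hDD⟩
        rw [show w₀ = w from Option.some.inj (h1.symm.trans hw),
          show w₀' = w' from Option.some.inj (h2.symm.trans hw')] at h3
        exact h3
      · intro hDD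
        obtain ⟨z₀, z₀', h1, h2, h3⟩ := hmatii.mpr ⟨w, w', hw, hw', hDD⟩
        rw [show z₀ = z from Option.some.inj (h1.symm.trans hz),
          show z₀' = z' from Option.some.inj (h2.symm.trans hz')] at h3
        exact h3
  · -- the pair (u, u')
    have hcu : (ball G k R u).card ≤ N + 1 := le_trans (hcard u) (by omega)
    have hcu' : (ball G k R u').card ≤ N + 1 := le_trans (hcard u') (by omega)
    rw [dif_pos hcu, dif_pos hcu'] at hcen
    refine ⟨Fin.castLE hcu ((ball G k R u).equivFin ⟨u, mem_ball_self R u⟩), ?_, ?_⟩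
    · exact binv_eq_some (mem_ball_self R u) (by simp)
    · rw [hcen]
      exact binv_eq_some (mem_ball_self R u') (by simp)
  · -- Dss
    ext z
    constructor
    · rintro ⟨w, i, hz, hw⟩
      simpa using (binv_some_mem hz).choose
    · intro hz
      simp only [Finset.mem_coe] at hz
      have hzb : binv G k R N u
          (Fin.castLE (by have := hcard u; omega) ((ball G k R u).equivFin ⟨z, hz⟩)) = some z :=
        binv_eq_some hz (by simp)
      obtain ⟨w, hw⟩ := hfwd hzb
      exact ⟨w, _, hzb, hw⟩
  · -- Rss
    ext w
    constructor
    · rintro ⟨z, i, hz, hw⟩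
      simpa using (binv_some_mem hw).choose
    · intro hw
      simp only [Finset.mem_coe] at hw
      have hwb : binv G k R N u'
          (Fin.castLE (by have := hcard u'; omega) ((ball G k R u').equivFin ⟨w, hw⟩)) = some w :=
        binv_eq_some hw (by simp)
      obtain ⟨z, hz⟩ := hbwd hwb
      exact ⟨z, _, hz, hwb⟩

end Encoding

section Final

variable {V : Type} [Fintype V] {G : SimpleGraph V} {k : ℕ}

lemma exists_cmap {p : ℕ} (hp : (univ.image (clsF G k)).card ≤ p) :
    ∃ cmap : V → Fin p, ∀ u v : V, cmap u = cmap v → clsF G k u = clsF G k v := by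
  set C := univ.image (clsF G k) with hC
  refine ⟨fun u => Fin.castLE hp (C.equivFin ⟨clsF G k u, mem_image_of_mem _ (mem_univ u)⟩),
    ?_⟩
  intro u v h
  have h2 := congrArg Fin.val h
  simp only [Fin.coe_castLE] at h2
  have := C.equivFin.injective (Fin.ext h2)
  exact congrArg Subtype.val this

lemma exists_xmap {Xb : ℕ} (hX : (XS G k).card ≤ Xb) :
    ∃ xmap : Fin Xb → Option V, ∀ x ∈ XS G k, ∃ j, xmap j = some x := by
  refine ⟨fun j => if h : (j : ℕ) < (XS G k).card then
    some ((XS G k).equivFin.symm ⟨j, h⟩ : V) else none, ?_⟩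
  intro x hx
  refine ⟨Fin.castLE hX ((XS G k).equivFin ⟨x, hx⟩), ?_⟩
  have hlt : ((Fin.castLE hX ((XS G k).equivFin ⟨x, hx⟩) : Fin Xb) : ℕ) < (XS G k).card := by
    simp
  simp only [dif_pos hlt]
  congr 1
  have : (⟨((Fin.castLE hX ((XS G k).equivFin ⟨x, hx⟩) : Fin Xb) : ℕ), hlt⟩ :
      Fin (XS G k).card) = (XS G k).equivFin ⟨x, hx⟩ := Fin.ext (by simp)
  rw [this]
  simp

lemma nearTwin_refl (H : SimpleGraph V) (ℓ : ℕ) (v : V) : nearTwin H ℓ v v := by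
  rw [nearTwin, symmDiff_self]
  simp

end Final

end Stmt16




theorem stmt16 (k₀ p : ℕ) (ψ : Language.graph.Formula (Fin 2)) :
    ∃ ℓ q : ℕ, ∀ (V : Type) [Fintype V] (G : SimpleGraph V),
      NearUniform G k₀ p → NearCovered (interpGraphPlain G ψ) ℓ q := by
  classical
  set R := Stmt16.radOf (Stmt16.qdepth ψ) with hR
  set d := p * (3 * k₀) with hd
  set N := (d+1)^R with hN
  set Xb := p * (6 * k₀ + 1) with hXb
  refine ⟨2 * N, Xb + Fintype.card (Stmt16.Code N p Xb), ?_⟩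
  intro V _ G hNU
  obtain ⟨k, hk, hE, hpcard⟩ := hNU
  have hclsP : (Finset.univ.image (Stmt16.clsF G k)).card ≤ p := by
    rw [Stmt16.classes_card_eq]
    exact hpcard
  have hdeg : ∀ z : V, (Finset.univ.filter (fun v => Stmt16.DD G k z v)).card ≤ d := by
    intro z
    refine le_trans (Stmt16.degBound hE hclsP z) ?_
    rw [hd]
    exact Nat.mul_le_mul_left p (by omega)
  have hball : ∀ u : V, (Stmt16.ball G k R u).card ≤ N :=
    fun u => Stmt16.ball_card hdeg R u
  obtain ⟨cmap, hcmap⟩ := Stmt16.exists_cmap hclsP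
  obtain ⟨xmap, hxmap⟩ := Stmt16.exists_xmap (Xb := Xb)
    (le_trans (Stmt16.XS_card hE hclsP) (Nat.mul_le_mul_left p (by omega)))
  set pickf : Stmt16.Code N p Xb → Option V := fun c =>
    if h : ∃ v : V, v ∉ Stmt16.XS G k ∧ Stmt16.enc G k R N p Xb cmap xmap v = c then
      some (Classical.choose h) else none with hpickf
  refine ⟨↑(Stmt16.XS G k) ∪ {v | ∃ c, pickf c = some v}, ?_, ?_⟩
  · refine le_trans (Set.ncard_union_le _ _) ?_
    have h1 : (↑(Stmt16.XS G k) : Set V).ncard ≤ Xb := by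
      rw [Set.ncard_coe_finset]
      exact le_trans (Stmt16.XS_card hE hclsP) (Nat.mul_le_mul_left p (by omega))
    have h2 : {v : V | ∃ c, pickf c = some v}.ncard ≤ Fintype.card (Stmt16.Code N p Xb) := by
      have hsub : {v : V | ∃ c, pickf c = some v} ⊆
          ↑((Finset.univ : Finset (Stmt16.Code N p Xb)).biUnion
            (fun c => (pickf c).toFinset)) := by
        rintro v ⟨c, hc⟩
        simp only [Finset.coe_biUnion, Finset.coe_univ, Set.mem_iUnion, Finset.mem_coe]
        exact ⟨c, trivial, by simp [hc]⟩
      refine le_trans (Set.ncard_le_ncard hsub (Set.toFinite _)) ?_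
      rw [Set.ncard_coe_finset]
      refine le_trans Finset.card_biUnion_le ?_
      calc ∑ c ∈ Finset.univ, ((pickf c).toFinset).card
          ≤ ∑ _c ∈ (Finset.univ : Finset (Stmt16.Code N p Xb)), 1 := by
            refine Finset.sum_le_sum (fun c _ => ?_)
            cases pickf c <;> simp
        _ = Fintype.card (Stmt16.Code N p Xb) := by simp
    omega
  · intro v
    by_cases hvX : v ∈ Stmt16.XS G k
    · exact ⟨v, Or.inl (by simpa using hvX), Stmt16.nearTwin_refl _ _ v⟩
    · have hex : ∃ v' : V, v' ∉ Stmt16.XS G k ∧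
          Stmt16.enc G k R N p Xb cmap xmap v' = Stmt16.enc G k R N p Xb cmap xmap v :=
        ⟨v, hvX, rfl⟩
      refine ⟨Classical.choose hex, Or.inr ⟨Stmt16.enc G k R N p Xb cmap xmap v, ?_⟩, ?_⟩
      · rw [hpickf]
        simp only
        rw [dif_pos hex]
      · have hspec := Classical.choose_spec hex
        have hTEq := Stmt16.enc_TEq hcmap hxmap hball hspec.1 hvX hspec.2
        exact Stmt16.TEq_interp_nearTwin ψ hTEq hball
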